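/- (Lemma 5.5, Tsuji vs. Nevanlinna characteristics) Let v be a subharmonic function on ℂ. Define the Nevanlinna characteristic T(r,v) = (1/2π)∫₀^{2π} v⁺(r e^{iθ}) dθ and the Tsuji characteristic 𝔗(r,v) = (1/2π)∫₀^{2π} v⁺(r|sin θ| e^{iθ}) dθ/(r sin²θ). Then for every R > 0, ∫_R^∞ T(r,v)/r³ dr ≤ ∫_R^∞ 𝔗(r,v)/r² dr. -/

import Mathlib

open MeasureTheory

/-- `v` is subharmonic on `ℂ`: upper semicontinuous and satisfying the sub-mean value
inequality on every circle. -/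
def Subharmonic (v : ℂ → ℝ) : Prop :=
  UpperSemicontinuous v ∧
    ∀ z : ℂ, ∀ r : ℝ, 0 < r →
      v z ≤ (2 * Real.pi)⁻¹ *
        ∫ θ in (0:ℝ)..(2 * Real.pi), v (z + (r : ℂ) * Complex.exp ((θ : ℂ) * Complex.I))

open scoped ENNReal

open Set
open scoped ENNReal

noncomputable def Faux (v : ℂ → ℝ) (x θ : ℝ) : ℝ≥0∞ :=
  ENNReal.ofReal (max (v ((x : ℂ) * Complex.exp ((θ : ℂ) * Complex.I))) 0)

theorem aux_main (v : ℂ → ℝ) (hvm : Measurable v) (R : ℝ) (hR : 0 < R) :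
    (∫⁻ r in Set.Ioi R,
        ((∫⁻ θ in Set.Ioc (0:ℝ) (2 * Real.pi), Faux v r θ) /
          ENNReal.ofReal (2 * Real.pi)) / ENNReal.ofReal (r ^ 3))
      ≤ ∫⁻ r in Set.Ioi R,
        ((∫⁻ θ in Set.Ioc (0:ℝ) (2 * Real.pi),
            Faux v (r * |Real.sin θ|) θ * ENNReal.ofReal (1 / (r * Real.sin θ ^ 2))) /
          ENNReal.ofReal (2 * Real.pi)) / ENNReal.ofReal (r ^ 2) := by
  have h2pi : (0:ℝ) < 2 * Real.pi := Real.two_pi_pos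
  set S : Set ℝ := Ioc (0:ℝ) (2 * Real.pi) with hS
  set c2 : ℝ≥0∞ := ENNReal.ofReal (2 * Real.pi) with hc2
  have hc2ne : c2 ≠ 0 := by simp [hc2, ENNReal.ofReal_eq_zero, not_le, h2pi, Real.pi_pos]
  have hc2inv : c2⁻¹ ≠ ∞ := ENNReal.inv_ne_top.2 hc2ne
  have hC : Continuous fun p : ℝ × ℝ => ((p.1 : ℂ) * Complex.exp ((p.2 : ℂ) * Complex.I)) :=
    (Complex.continuous_ofReal.comp continuous_fst).mul
      (Complex.continuous_exp.comp ((Complex.continuous_ofReal.comp continuous_snd).mul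
        continuous_const))
  have hFmeas : Measurable fun p : ℝ × ℝ => Faux v p.1 p.2 :=
    ENNReal.measurable_ofReal.comp ((hvm.comp hC.measurable).max measurable_const)
  have hmul : Measurable fun p : ℝ × ℝ => (p.1 * |Real.sin p.2|, p.2) :=
    (measurable_fst.mul ((Real.measurable_sin.comp measurable_snd).abs)).prodMk measurable_snd
  have hFmeas2 : Measurable fun p : ℝ × ℝ => Faux v (p.1 * |Real.sin p.2|) p.2 :=
    hFmeas.comp hmul
  have hw : Measurable fun p : ℝ × ℝ => ENNReal.ofReal (1 / (p.1 * Real.sin p.2 ^ 2)) :=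
    ENNReal.measurable_ofReal.comp (measurable_const.div
      (measurable_fst.mul ((Real.measurable_sin.comp measurable_snd).pow_const 2)))
  -- key per-θ inequality
  have key : ∀ θ : ℝ, Real.sin θ ≠ 0 →
      (∫⁻ r in Ioi R, Faux v r θ / ENNReal.ofReal (r ^ 3)) ≤
        ∫⁻ r in Ioi R,
          Faux v (r * |Real.sin θ|) θ * ENNReal.ofReal (1 / (r * Real.sin θ ^ 2)) /
            ENNReal.ofReal (r ^ 2) := by
    intro θ hθ
    set s : ℝ := |Real.sin θ| with hsdef
    have hs : 0 < s := abs_pos.2 hθ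
    have hs1 : s ≤ 1 := abs_le.2 ⟨Real.neg_one_le_sin θ, Real.sin_le_one θ⟩
    set h : ℝ → ℝ≥0∞ := fun ρ => Faux v ρ θ * ENNReal.ofReal (s / ρ ^ 3) with hhdef
    have step1 : (∫⁻ r in Ioi R,
        Faux v (r * s) θ * ENNReal.ofReal (1 / (r * Real.sin θ ^ 2)) / ENNReal.ofReal (r ^ 2))
        = ∫⁻ r in Ioi R, h (s * r) := by
      refine setLIntegral_congr_fun measurableSet_Ioi
        (fun r hr => ?_)
      have hr0 : 0 < r := hR.trans hr
      have hnn : (0:ℝ) ≤ 1 / (r * Real.sin θ ^ 2) :=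
        one_div_nonneg.2 (mul_nonneg hr0.le (sq_nonneg _))
      have key2 : (1 / (r * Real.sin θ ^ 2)) * (r ^ 2)⁻¹ = s / (s * r) ^ 3 := by
        have hθ2 : Real.sin θ ^ 2 ≠ 0 := pow_ne_zero 2 hθ
        rw [← sq_abs (Real.sin θ), ← hsdef]
        field_simp
      show Faux v (r * s) θ * ENNReal.ofReal (1 / (r * Real.sin θ ^ 2)) / ENNReal.ofReal (r ^ 2)
          = Faux v (s * r) θ * ENNReal.ofReal (s / (s * r) ^ 3)
      rw [mul_comm r s, div_eq_mul_inv, mul_assoc,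
        ← ENNReal.ofReal_inv_of_pos (pow_pos hr0 2),
        ← ENNReal.ofReal_mul hnn, key2]
    have emb : MeasurableEmbedding fun x : ℝ => s * x := measurableEmbedding_mulLeft₀ hs.ne'
    have hpre : (fun x : ℝ => s * x) ⁻¹' Ioi (s * R) = Ioi R := by
      rw [preimage_const_mul_Ioi₀ _ hs, mul_div_cancel_left₀ _ hs.ne']
    have step2 : (∫⁻ r in Ioi R, h (s * r)) = ENNReal.ofReal s⁻¹ * ∫⁻ x in Ioi (s * R), h x := by
      rw [← emb.lintegral_map, ← hpre,
        ← Measure.restrict_map (measurable_const_mul s) measurableSet_Ioi,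
        Real.map_volume_mul_left hs.ne', Measure.restrict_smul, lintegral_smul_measure,
        abs_of_pos (inv_pos.2 hs), smul_eq_mul]
    have step3 : (∫⁻ x in Ioi R, h x)
        = ENNReal.ofReal s * ∫⁻ x in Ioi R, Faux v x θ / ENNReal.ofReal (x ^ 3) := by
      rw [← lintegral_const_mul' _ _ ENNReal.ofReal_ne_top]
      refine setLIntegral_congr_fun measurableSet_Ioi
        (fun x hx => ?_)
      have hx0 : 0 < x := hR.trans hx
      show Faux v x θ * ENNReal.ofReal (s / x ^ 3)
          = ENNReal.ofReal s * (Faux v x θ / ENNReal.ofReal (x ^ 3))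
      rw [div_eq_mul_inv s, ENNReal.ofReal_mul hs.le,
        ENNReal.ofReal_inv_of_pos (by positivity : (0:ℝ) < x ^ 3), div_eq_mul_inv]
      ring
    rw [step1, step2]
    have hmono : ENNReal.ofReal s⁻¹ * ∫⁻ x in Ioi R, h x
        ≤ ENNReal.ofReal s⁻¹ * ∫⁻ x in Ioi (s * R), h x :=
      mul_le_mul_right (lintegral_mono_set (Ioi_subset_Ioi (by nlinarith))) _
    refine le_trans ?_ hmono
    rw [step3, ← mul_assoc, ← ENNReal.ofReal_mul (inv_nonneg.2 hs.le),
      inv_mul_cancel₀ hs.ne', ENNReal.ofReal_one, one_mul]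
  -- measurability of the two product integrands
  have hG : Measurable fun p : ℝ × ℝ => Faux v p.1 p.2 / ENNReal.ofReal (p.1 ^ 3) / c2 :=
    (hFmeas.div (ENNReal.measurable_ofReal.comp (measurable_fst.pow_const 3))).div
      measurable_const
  have hH : Measurable fun p : ℝ × ℝ =>
      Faux v (p.1 * |Real.sin p.2|) p.2 * ENNReal.ofReal (1 / (p.1 * Real.sin p.2 ^ 2)) /
        ENNReal.ofReal (p.1 ^ 2) / c2 :=
    ((hFmeas2.mul hw).div (ENNReal.measurable_ofReal.comp (measurable_fst.pow_const 2))).div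
      measurable_const
  have L : (∫⁻ r in Ioi R, (∫⁻ θ in S, Faux v r θ) / c2 / ENNReal.ofReal (r ^ 3))
      = ∫⁻ θ in S, (∫⁻ r in Ioi R, Faux v r θ / ENNReal.ofReal (r ^ 3)) / c2 := by
    have L1 : (∫⁻ r in Ioi R, (∫⁻ θ in S, Faux v r θ) / c2 / ENNReal.ofReal (r ^ 3))
        = ∫⁻ r in Ioi R, ∫⁻ θ in S, Faux v r θ / ENNReal.ofReal (r ^ 3) / c2 := by
      refine setLIntegral_congr_fun measurableSet_Ioi
        (fun r hr => ?_)
      have hr0 : 0 < r := hR.trans hr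
      have h3 : (ENNReal.ofReal (r ^ 3))⁻¹ ≠ ∞ := by
        rw [ENNReal.inv_ne_top, Ne, ENNReal.ofReal_eq_zero, not_le]
        positivity
      simp only [div_eq_mul_inv]
      rw [lintegral_mul_const' _ _ hc2inv, lintegral_mul_const' _ _ h3]
      exact mul_right_comm _ _ _
    rw [L1, lintegral_lintegral_swap hG.aemeasurable]
    refine lintegral_congr fun θ => ?_
    simp only [div_eq_mul_inv]
    rw [lintegral_mul_const' _ _ hc2inv]
  have Rw : (∫⁻ r in Ioi R,
      (∫⁻ θ in S, Faux v (r * |Real.sin θ|) θ * ENNReal.ofReal (1 / (r * Real.sin θ ^ 2))) /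
        c2 / ENNReal.ofReal (r ^ 2))
      = ∫⁻ θ in S, (∫⁻ r in Ioi R,
          Faux v (r * |Real.sin θ|) θ * ENNReal.ofReal (1 / (r * Real.sin θ ^ 2)) /
            ENNReal.ofReal (r ^ 2)) / c2 := by
    have L1 : (∫⁻ r in Ioi R,
        (∫⁻ θ in S, Faux v (r * |Real.sin θ|) θ * ENNReal.ofReal (1 / (r * Real.sin θ ^ 2))) /
          c2 / ENNReal.ofReal (r ^ 2))
        = ∫⁻ r in Ioi R, ∫⁻ θ in S,
            Faux v (r * |Real.sin θ|) θ * ENNReal.ofReal (1 / (r * Real.sin θ ^ 2)) /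
              ENNReal.ofReal (r ^ 2) / c2 := by
      refine setLIntegral_congr_fun measurableSet_Ioi
        (fun r hr => ?_)
      have hr0 : 0 < r := hR.trans hr
      have h3 : (ENNReal.ofReal (r ^ 2))⁻¹ ≠ ∞ := by
        rw [ENNReal.inv_ne_top, Ne, ENNReal.ofReal_eq_zero, not_le]
        positivity
      simp only [div_eq_mul_inv]
      rw [lintegral_mul_const' _ _ hc2inv, lintegral_mul_const' _ _ h3]
      exact mul_right_comm _ _ _
    rw [L1, lintegral_lintegral_swap hH.aemeasurable]
    refine lintegral_congr fun θ => ?_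
    simp only [div_eq_mul_inv]
    rw [lintegral_mul_const' _ _ hc2inv]
  rw [L, Rw]
  have hae0 : ∀ᵐ θ : ℝ, Real.sin θ ≠ 0 := by
    have hsub : {θ : ℝ | Real.sin θ = 0} ⊆ Set.range fun n : ℤ => (n : ℝ) * Real.pi := by
      intro θ hθ
      obtain ⟨n, hn⟩ := Real.sin_eq_zero_iff.1 hθ
      exact ⟨n, hn⟩
    have hns : volume {θ : ℝ | Real.sin θ = 0} = 0 :=
      measure_mono_null hsub ((Set.countable_range _).measure_zero _)
    rw [ae_iff]
    simpa [not_not] using hns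
  refine lintegral_mono_ae ((ae_restrict_of_ae hae0).mono fun θ hθ => ?_)
  exact ENNReal.div_le_div_right (key θ hθ) _

/-- Lemma 5.5: for a subharmonic `v` on `ℂ`, with Nevanlinna characteristic
`T(r,v) = (1/2π)∫₀^{2π} v⁺(re^{iθ}) dθ` and Tsuji characteristic
`𝔗(r,v) = (1/2π)∫₀^{2π} v⁺(r|sin θ|e^{iθ}) dθ/(r sin²θ)`, one has
`∫_R^∞ T(r,v)/r³ dr ≤ ∫_R^∞ 𝔗(r,v)/r² dr` for every `R > 0`. -/
theorem stmt_14 (v : ℂ → ℝ) (hv : Subharmonic v) (R : ℝ) (hR : 0 < R) :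
    (∫⁻ r in Set.Ioi R,
        ((∫⁻ θ in Set.Ioc (0:ℝ) (2 * Real.pi),
            ENNReal.ofReal (max (v ((r : ℂ) * Complex.exp ((θ : ℂ) * Complex.I))) 0)) /
          ENNReal.ofReal (2 * Real.pi)) / ENNReal.ofReal (r ^ 3))
      ≤ ∫⁻ r in Set.Ioi R,
        ((∫⁻ θ in Set.Ioc (0:ℝ) (2 * Real.pi),
            ENNReal.ofReal
                (max (v (((r * |Real.sin θ| : ℝ) : ℂ) * Complex.exp ((θ : ℂ) * Complex.I))) 0) *
              ENNReal.ofReal (1 / (r * Real.sin θ ^ 2))) /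
          ENNReal.ofReal (2 * Real.pi)) / ENNReal.ofReal (r ^ 2) :=
  aux_main v hv.1.measurable R hR
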